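/- SEP₁ ≡_W (ρ→ρ_10): the restricted separation problem SEP₁ is continuously Weihrauch equivalent to the problem of translating the Cauchy representation of the reals into the decimal representation. -/

import Mathlib

open Filter Topology

abbrev Baire : Type := ℕ → ℕ

/-- The pairing `⟨p,q⟩(2n) = p(n)`, `⟨p,q⟩(2n+1) = q(n)`. -/
def pairB (p q : Baire) : Baire := fun n => if n % 2 = 0 then p (n / 2) else q (n / 2)

/-- A problem: a partial multivalued function on Baire space. -/
structure Problem where
  dom : Set Baire
  sol : Baire → Set Baire

/-- Continuous Weihrauch reducibility. -/
def WRed (f g : Problem) : Prop :=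
  ∃ (Kd Hd : Set Baire) (K H : Baire → Baire),
    ContinuousOn K Kd ∧ ContinuousOn H Hd ∧
      ∀ p ∈ f.dom, p ∈ Kd ∧ K p ∈ g.dom ∧
        ∀ q ∈ g.sol (K p), pairB p q ∈ Hd ∧ H (pairB p q) ∈ f.sol p

/-- Strong continuous Weihrauch reducibility. -/
def SWRed (f g : Problem) : Prop :=
  ∃ (Kd Hd : Set Baire) (K H : Baire → Baire),
    ContinuousOn K Kd ∧ ContinuousOn H Hd ∧
      ∀ p ∈ f.dom, p ∈ Kd ∧ K p ∈ g.dom ∧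
        ∀ q ∈ g.sol (K p), q ∈ Hd ∧ H q ∈ f.sol p

def WEquiv (f g : Problem) : Prop := WRed f g ∧ WRed g f
def SWEquiv (f g : Problem) : Prop := SWRed f g ∧ SWRed g f
def WLt (f g : Problem) : Prop := WRed f g ∧ ¬ WRed g f

/-- `range(p-1)`. -/
def rangeM (p : Baire) : Set ℕ := {n | ∃ i, p i = n + 1}

/-- Characteristic function of a set of naturals. -/
noncomputable def chi (A : Set ℕ) : Baire := A.indicator fun _ => 1

noncomputable def EC : Problem where
  dom := Set.univ
  sol := fun p => {chi (rangeM p)}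

noncomputable def EC1 : Problem where
  dom := {p | ((rangeM p)ᶜ).encard ≤ 1}
  sol := fun p => {chi (rangeM p)}

def pfst (r : Baire) : Baire := fun n => r (2 * n)
def psnd (r : Baire) : Baire := fun n => r (2 * n + 1)

noncomputable def SEP : Problem where
  dom := {r | rangeM (pfst r) ∩ rangeM (psnd r) = ∅}
  sol := fun r =>
    {s | ∃ A : Set ℕ, s = chi A ∧ rangeM (pfst r) ⊆ A ∧ A ⊆ (rangeM (psnd r))ᶜ}

noncomputable def SEP1 : Problem where
  dom := {r | rangeM (pfst r) ∩ rangeM (psnd r) = ∅ ∧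
    ((rangeM (pfst r) ∪ rangeM (psnd r))ᶜ).encard ≤ 1}
  sol := SEP.sol

/- rationals -/
def ratEnum (i : ℕ) : ℚ :=
  ((i.unpair.1 : ℚ) - (i.unpair.2.unpair.1 : ℚ)) / ((i.unpair.2.unpair.2 : ℚ) + 1)

def rhoCauchy (p : Baire) (x : ℝ) : Prop :=
  ∀ n, |(ratEnum (p n) : ℝ) - x| ≤ (2 : ℝ) ^ (-(n : ℤ))

def rhoNaive (p : Baire) (x : ℝ) : Prop :=
  Tendsto (fun n => ((ratEnum (p n) : ℝ))) atTop (nhds x)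

def rhoLt (p : Baire) (x : ℝ) : Prop := rangeM p = {n | (ratEnum n : ℝ) < x}
def rhoGt (p : Baire) (x : ℝ) : Prop := rangeM p = {n | x < (ratEnum n : ℝ)}

def rhoCfLt (p : Baire) (x : ℝ) : Prop :=
  (∀ n, p n ≤ 1) ∧ ∀ n, (p n = 1 ↔ (ratEnum n : ℝ) < x)
def rhoCfGt (p : Baire) (x : ℝ) : Prop :=
  (∀ n, p n ≤ 1) ∧ ∀ n, (p n = 1 ↔ x < (ratEnum n : ℝ))

noncomputable def cfTail : List ℕ → ℝ
  | [] => 0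
  | b :: l => 1 / ((b : ℝ) + cfTail l)

noncomputable def cfApprox (p : Baire) (k : ℕ) : ℝ :=
  ((Denumerable.ofNat ℤ (p 0) : ℤ) : ℝ) + cfTail ((List.range k).map fun i => p (i + 1))

def rhoCf (p : Baire) (x : ℝ) : Prop :=
  ((∀ i, 1 ≤ i → 1 ≤ p i) ∧ Tendsto (cfApprox p) atTop (nhds x)) ∨
    (∃ k, 1 ≤ k ∧ p k = 0 ∧ (∀ i, 1 ≤ i → i < k → 1 ≤ p i) ∧
      (2 ≤ k → 2 ≤ p (k - 1)) ∧ x = cfApprox p (k - 1))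

def rhoDec (p : Baire) (x : ℝ) : Prop :=
  (∀ n, 1 ≤ n → p n ≤ 9) ∧
    x = ((Denumerable.ofNat ℤ (p 0) : ℤ) : ℝ) + ∑' n : ℕ, (p (n + 1) : ℝ) / 10 ^ (n + 1)

/-- The implication problem between two representations of ℝ. -/
def implProblem (d1 d2 : Baire → ℝ → Prop) : Problem where
  dom := {p | ∃ x, d1 p x}
  sol := fun p => {q | ∃ x, d1 p x ∧ d2 q x}

/- trees / WKL / choice on Cantor space -/
def wordCode : List Bool → ℕ
  | [] => 0
  | b :: w => 2 * wordCode w + (if b then 2 else 1)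

def prefixList (x : Baire) (k : ℕ) : List Bool := (List.range k).map fun i => decide (x i = 1)

def isTreeCode (t : Baire) : Prop :=
  (∀ n, t n ≤ 1) ∧
    ∀ w v : List Bool, w <+: v → t (wordCode v) = 1 → t (wordCode w) = 1

def WKL : Problem where
  dom := {t | isTreeCode t ∧ {w : List Bool | t (wordCode w) = 1}.Infinite}
  sol := fun t => {x | (∀ n, x n ≤ 1) ∧ ∀ k, t (wordCode (prefixList x k)) = 1}

def Ap (p : Baire) : Set Baire :=
  {x | (∀ n, x n ≤ 1) ∧ ∀ k, wordCode (prefixList x k) ∉ rangeM p}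

def CCantor : Problem where
  dom := {p | (Ap p).Nonempty}
  sol := Ap

def Cle2 : Problem where
  dom := {p | (Ap p).Nonempty ∧ (Ap p).encard ≤ 2}
  sol := Ap

/- limit and parallelization -/
def projCount (r : Baire) (n : ℕ) : Baire := fun k => r (Nat.pair n k)

def limP : Problem where
  dom := {r | ∃ q : Baire, ∀ k, Tendsto (fun n => projCount r n k) atTop (nhds (q k))}
  sol := fun r => {q | ∀ k, Tendsto (fun n => projCount r n k) atTop (nhds (q k))}

def parallel (f : Problem) : Problem where
  dom := {r | ∀ n, projCount r n ∈ f.dom}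
  sol := fun r => {s | ∀ n, projCount s n ∈ f.sol (projCount r n)}

def MCT : Problem where
  dom := {r | ∃ xs : ℕ → ℝ, (∀ n, rhoCauchy (projCount r n) (xs n)) ∧
    Monotone xs ∧ BddAbove (Set.range xs)}
  sol := fun r => {q | ∃ xs : ℕ → ℝ, (∀ n, rhoCauchy (projCount r n) (xs n)) ∧
    Monotone xs ∧ BddAbove (Set.range xs) ∧ rhoCauchy q (⨆ n, xs n)}

/- SORT and RAT -/
open Classical in
noncomputable def sortOut (p : Baire) : Baire := fun k =>
  if {i | p i = 0}.Infinite then 0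
  else if k < {i | p i = 0}.ncard then 0 else 1

noncomputable def SORT : Problem where
  dom := {p | ∀ n, p n ≤ 1}
  sol := fun p => {sortOut p}

def znk (n : ℕ) : Baire := fun k => if k < n then 0 else 1

def RAT : Problem where
  dom := {p | ∃ x, rhoCauchy p x}
  sol := fun p => {s | ∃ x, rhoCauchy p x ∧
    ((∃ n, x = (ratEnum n : ℝ) ∧ s = znk n) ∨
      ((∀ r : ℚ, x ≠ (r : ℝ)) ∧ s = fun _ => 0))}

/- omniscience principles -/
def projFin (m i : ℕ) (r : Baire) : Baire := fun k => r (m * k + i - 1)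
def isZeroSeq (p : Baire) : Prop := ∀ k, p k = 0
def constSeq (i : ℕ) : Baire := fun _ => i

noncomputable def LPOn (n : ℕ) : Problem where
  dom := Set.univ
  sol := fun r => {constSeq ({i | 1 ≤ i ∧ i ≤ n ∧ isZeroSeq (projFin n i r)}.ncard)}

def LLPOn (n : ℕ) : Problem where
  dom := {r | {i | 1 ≤ i ∧ i ≤ n ∧ ¬ isZeroSeq (projFin n i r)}.encard ≤ 1}
  sol := fun r => {s | ∃ i, 1 ≤ i ∧ i ≤ n ∧ isZeroSeq (projFin n i r) ∧ s = constSeq i}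

def MLPOn (n : ℕ) : Problem where
  dom := {r | ∃ i, 1 ≤ i ∧ i ≤ n ∧ isZeroSeq (projFin n i r)}
  sol := fun r => {s | ∃ i, 1 ≤ i ∧ i ≤ n ∧ isZeroSeq (projFin n i r) ∧ s = constSeq i}

def LPO : Problem where
  dom := Set.univ
  sol := fun p => {s | (isZeroSeq p ∧ s = constSeq 1) ∨ (¬ isZeroSeq p ∧ s = constSeq 0)}

/- choice problems on ℕ etc. -/
def Cfin (n : ℕ) : Problem where
  dom := {p | ∃ i, i < n ∧ i ∉ rangeM p}
  sol := fun p => {s | ∃ i, i < n ∧ i ∉ rangeM p ∧ s = constSeq i}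

def ACCfin (n : ℕ) : Problem where
  dom := {p | (∃ i, i < n ∧ i ∉ rangeM p) ∧ ({i | i < n} ∩ rangeM p).encard ≤ 1}
  sol := (Cfin n).sol

def CNat : Problem where
  dom := {p | ∃ i, i ∉ rangeM p}
  sol := fun p => {s | ∃ i, i ∉ rangeM p ∧ s = constSeq i}

/- differentiation -/
instance : Countable (AddMonoidAlgebra ℚ ℕ) :=
  AddMonoidAlgebra.coeff_injective.countable

instance : Countable (Polynomial ℚ) :=
  Polynomial.toFinsupp_injective.countable

noncomputable def polyEnum : ℕ → Polynomial ℚ :=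
  (exists_surjective_nat (Polynomial ℚ)).choose

noncomputable def polyFun (k : ℕ) : C(Set.Icc (0:ℝ) 1, ℝ) :=
  ⟨fun x => ((polyEnum k).map (algebraMap ℚ ℝ)).eval (x : ℝ),
   (((polyEnum k).map (algebraMap ℚ ℝ)).continuous).comp continuous_subtype_val⟩

noncomputable def deltaC (p : Baire) (f : C(Set.Icc (0:ℝ) 1, ℝ)) : Prop :=
  ∀ n, ‖f - polyFun (p n)‖ ≤ (2 : ℝ) ^ (-(n : ℤ))

def IsDerivOn (f g : C(Set.Icc (0:ℝ) 1, ℝ)) : Prop :=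
  ∀ x : Set.Icc (0:ℝ) 1,
    HasDerivWithinAt (Set.IccExtend (by norm_num : (0:ℝ) ≤ 1) f) (g x) (Set.Icc 0 1) (x : ℝ)

noncomputable def diffP : Problem where
  dom := {p | ∃ f g, deltaC p f ∧ IsDerivOn f g}
  sol := fun p => {q | ∃ f g, deltaC p f ∧ IsDerivOn f g ∧ deltaC q g}

open scoped Classical

lemma pfst_pairB (a b : Baire) : pfst (pairB a b) = a := by
  funext n
  simp [pfst, pairB, Nat.mul_mod_right, Nat.mul_div_cancel_left]

lemma psnd_pairB (a b : Baire) : psnd (pairB a b) = b := by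
  funext n
  have h1 : (2 * n + 1) % 2 = 1 := by omega
  have h2 : (2 * n + 1) / 2 = n := by omega
  simp [psnd, pairB, h1, h2]

lemma continuousOn_of_prefix {F : Baire → Baire} {S : Set Baire}
    (h : ∀ z ∈ S, ∀ n, ∃ N, ∀ z', (∀ i < N, z' i = z i) → F z' n = F z n) :
    ContinuousOn F S := by
  intro z hz
  rw [ContinuousWithinAt, tendsto_pi_nhds]
  intro n
  obtain ⟨N, hN⟩ := h z hz n
  have hev : ∀ᶠ z' in 𝓝 z, ∀ i < N, z' i = z i := by
    have h1 : ∀ i : ℕ, ∀ᶠ z' in 𝓝 z, z' i = z i := by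
      intro i
      have hop : IsOpen {z' : Baire | z' i = z i} := by
        have : {z' : Baire | z' i = z i} = (fun z' : Baire => z' i) ⁻¹' {z i} := rfl
        rw [this]
        exact IsOpen.preimage (continuous_apply i) (isOpen_discrete _)
      exact hop.mem_nhds rfl
    have h2 : ∀ᶠ z' in 𝓝 z, ∀ i ∈ Finset.range N, z' i = z i :=
      (Filter.eventually_all_finset _).mpr fun i _ => h1 i
    exact h2.mono fun z' hz' i hi => hz' i (Finset.mem_range.mpr hi)
  exact tendsto_nhds_of_eventually_eq
    ((hev.filter_mono nhdsWithin_le_nhds).mono fun z' hz' => hN z' hz')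

lemma find_congr {P Q : ℕ → Prop} [DecidablePred P] [DecidablePred Q]
    (h1 : ∃ n, P n) (h2 : ∃ n, Q n) (h : ∀ n, P n ↔ Q n) :
    Nat.find h1 = Nat.find h2 :=
  le_antisymm (Nat.find_min' _ ((h _).mpr (Nat.find_spec h2)))
    (Nat.find_min' _ ((h _).mp (Nat.find_spec h1)))

def qcode (v : ℚ) : ℕ := Nat.pair v.num.toNat (Nat.pair (-v.num).toNat (v.den - 1))

lemma ratEnum_qcode (v : ℚ) : ratEnum (qcode v) = v := by
  unfold ratEnum qcode
  rw [Nat.unpair_pair, Nat.unpair_pair]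
  have hnum : (v.num.toNat : ℤ) - ((-v.num).toNat : ℤ) = v.num := by omega
  have h1 : ((v.num.toNat : ℕ) : ℚ) - (((-v.num).toNat : ℕ) : ℚ) = (v.num : ℚ) := by
    exact_mod_cast hnum
  have hden : (((v.den - 1 : ℕ)) : ℚ) + 1 = (v.den : ℚ) := by
    have h2 : v.den - 1 + 1 = v.den := Nat.succ_pred_eq_of_pos v.pos
    exact_mod_cast h2
  simp only [h1, hden]
  exact Rat.num_div_den v

lemma rhoCauchy_bounds {p : Baire} {x : ℝ} (h : rhoCauchy p x) (n : ℕ) :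
    x - ((2:ℝ)^n)⁻¹ ≤ (ratEnum (p n) : ℝ) ∧ (ratEnum (p n) : ℝ) ≤ x + ((2:ℝ)^n)⁻¹ := by
  have h1 := h n
  have h2 : (2:ℝ)^(-(n:ℤ)) = ((2:ℝ)^n)⁻¹ := by rw [zpow_neg, zpow_natCast]
  rw [h2, abs_le] at h1
  constructor <;> linarith [h1.1, h1.2]

lemma rhoCauchy_unique {p : Baire} {x y : ℝ} (hx : rhoCauchy p x) (hy : rhoCauchy p y) : x = y := by
  by_contra hne
  have hpos : 0 < |x - y| := abs_pos.mpr (sub_ne_zero.mpr hne)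
  obtain ⟨n, hn⟩ := exists_pow_lt_of_lt_one (show (0:ℝ) < |x-y|/2 by linarith) (show (1/2:ℝ) < 1 by norm_num)
  have hhalf : (1/2:ℝ)^n = ((2:ℝ)^n)⁻¹ := by rw [one_div, inv_pow]
  have b1 := rhoCauchy_bounds hx n
  have b2 := rhoCauchy_bounds hy n
  rw [hhalf] at hn
  rcases abs_cases (x - y) with ⟨he, _⟩ | ⟨he, _⟩ <;> rw [he] at hn hpos <;> linarith [b1.1, b1.2, b2.1, b2.2]

lemma summable_geom_c (c : ℝ) : Summable (fun k : ℕ => c * (1/10:ℝ)^k) :=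
  (summable_geometric_of_lt_one (r := (1/10:ℝ)) (by norm_num) (by norm_num)).mul_left c

lemma summable_of_geom_bound (f : ℕ → ℝ) (c : ℝ) (hf : ∀ k, |f k| ≤ c * (1/10)^k) : Summable f :=
  Summable.of_norm_bounded (summable_geom_c c)
    (fun i => by rw [Real.norm_eq_abs]; exact hf i)

lemma tsum_abs_le_geom (f : ℕ → ℝ) (c : ℝ) (hf : ∀ k, |f k| ≤ c * (1/10)^k) :
    |∑' k, f k| ≤ c * (10/9) := by
  have hs := summable_of_geom_bound f c hf
  have hg : Summable (fun k : ℕ => c * (1/10:ℝ)^k) := summable_geom_c c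
  have habs : Summable (fun k => |f k|) := hs.abs
  have h1 : |∑' k, f k| ≤ ∑' k, |f k| := by
    have h0 : Summable (fun k => ‖f k‖) := by simpa [Real.norm_eq_abs] using habs
    have := norm_tsum_le_tsum_norm (f := f) h0
    simpa [Real.norm_eq_abs] using this
  have h2 : ∑' k, |f k| ≤ ∑' k, c * (1/10:ℝ)^k := Summable.tsum_le_tsum hf habs hg
  have h3 : ∑' k, c * (1/10:ℝ)^k = c * (10/9) := by
    rw [tsum_mul_left, tsum_geometric_of_lt_one (r := (1/10:ℝ)) (by norm_num) (by norm_num)]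
    norm_num
  linarith
noncomputable def decTrunc (y : Baire) (s : ℕ) : ℤ :=
  (Denumerable.ofNat ℤ (y 0) : ℤ) * 10^s + ∑ i ∈ Finset.range s, (y (i+1) : ℤ) * 10^(s-1-i)

lemma digit_summable {y : Baire} (hd : ∀ n, 1 ≤ n → y n ≤ 9) :
    Summable (fun n : ℕ => (y (n+1) : ℝ)/10^(n+1)) := by
  apply summable_of_geom_bound _ (9/10)
  intro k
  rw [abs_of_nonneg (by positivity)]
  have h9 : (y (k+1) : ℝ) ≤ 9 := by exact_mod_cast hd (k+1) (by omega)
  have hp : (0:ℝ) < 10^(k+1) := by positivity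
  rw [div_le_iff₀ hp]
  have : (9/10:ℝ) * (1/10)^k * 10^(k+1) = 9 := by
    rw [div_pow, one_pow]
    field_simp
    ring
  rw [this]; exact h9

lemma decTrunc_bounds {y : Baire} {x : ℝ} (h : rhoDec y x) (s : ℕ) :
    ((decTrunc y s : ℤ) : ℝ) ≤ x * 10^s ∧ x * 10^s ≤ ((decTrunc y s : ℤ) : ℝ) + 1 := by
  obtain ⟨hd, hx⟩ := h
  set a : ℕ → ℝ := fun n => (y (n+1) : ℝ)/10^(n+1) with ha
  have hsum : Summable a := digit_summable hd
  have hsplit : ∑ i ∈ Finset.range s, a i + ∑' i, a (i+s) = ∑' i, a i :=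
    Summable.sum_add_tsum_nat_add s hsum
  have htail_sum : Summable (fun i => a (i+s)) := by
    exact (summable_nat_add_iff s).mpr hsum
  have htail0 : 0 ≤ ∑' i, a (i+s) := tsum_nonneg (fun i => by positivity)
  have htail1 : ∑' i, a (i+s) ≤ (1/10:ℝ)^s := by
    have hb : ∀ k, |a (k+s)| ≤ ((9/10) * (1/10)^s) * (1/10)^k := by
      intro k
      rw [abs_of_nonneg (by positivity)]
      have h9 : (y (k+s+1) : ℝ) ≤ 9 := by exact_mod_cast hd (k+s+1) (by omega)
      have hp : (0:ℝ) < 10^(k+s+1) := by positivity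
      show (y (k+s+1) : ℝ)/10^(k+s+1) ≤ _
      rw [div_le_iff₀ hp]
      have : (9/10:ℝ) * (1/10)^s * (1/10)^k * 10^(k+s+1) = 9 := by
        rw [div_pow, div_pow, one_pow, one_pow]
        field_simp
        ring
      rw [this]; exact h9
    have := tsum_abs_le_geom _ _ hb
    have heq : (9/10:ℝ) * (1/10)^s * (10/9) = (1/10)^s := by ring
    calc ∑' i, a (i+s) ≤ |∑' i, a (i+s)| := le_abs_self _
      _ ≤ (9/10:ℝ) * (1/10)^s * (10/9) := this
      _ = (1/10)^s := heq
  -- rewrite the finite sum scaled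
  have hterm : ∀ i ∈ Finset.range s, a i * 10^s = ((y (i+1) : ℤ) : ℝ) * 10^(s-1-i) := by
    intro i hi
    rw [Finset.mem_range] at hi
    have hpow : (10:ℝ)^(s-1-i) * 10^(i+1) = 10^s := by
      rw [← pow_add]
      congr 1
      omega
    have hp : (0:ℝ) < 10^(i+1) := by positivity
    show (y (i+1) : ℝ)/10^(i+1) * 10^s = ((y (i+1) : ℤ) : ℝ) * 10^(s-1-i)
    push_cast
    rw [div_mul_eq_mul_div, div_eq_iff (ne_of_gt hp), mul_assoc, hpow]
  have hcast : ((decTrunc y s : ℤ) : ℝ) =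
      ((Denumerable.ofNat ℤ (y 0) : ℤ) : ℝ) * 10^s + ∑ i ∈ Finset.range s, ((y (i+1):ℤ):ℝ) * 10^(s-1-i) := by
    unfold decTrunc; push_cast; ring
  have hfin : (∑ i ∈ Finset.range s, a i) * 10^s = ∑ i ∈ Finset.range s, ((y (i+1):ℤ):ℝ) * 10^(s-1-i) := by
    rw [Finset.sum_mul]; exact Finset.sum_congr rfl hterm
  have hxs : x * 10^s = ((decTrunc y s : ℤ) : ℝ) + (∑' i, a (i+s)) * 10^s := by
    have hx2 : x = ((Denumerable.ofNat ℤ (y 0) : ℤ) : ℝ) + (∑ i ∈ Finset.range s, a i + ∑' i, a (i+s)) := by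
      rw [hx, hsplit]
    rw [hx2, hcast, ← hfin]; ring
  have ht1 : (0:ℝ) ≤ (∑' i, a (i+s)) * 10^s := mul_nonneg htail0 (by positivity)
  have ht2 : (∑' i, a (i+s)) * 10^s ≤ 1 := by
    have he : (1/10:ℝ)^s * 10^s = 1 := by
      rw [div_pow, one_pow]; field_simp
    calc (∑' i, a (i+s)) * 10^s ≤ (1/10:ℝ)^s * 10^s :=
          mul_le_mul_of_nonneg_right htail1 (by positivity)
      _ = 1 := he
  exact ⟨by linarith, by linarith⟩
noncomputable def tiebreak (x : ℝ) (s : ℕ → ℕ) : ℕ :=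
  if h : ∃ v : ℚ, (v : ℝ) = x ∧ ∃ j : ℕ, ∃ z : ℤ, (v * 10^j : ℚ) = z
  then s (qcode h.choose) else 1

noncomputable def Fabs (x : ℝ) (s : ℕ → ℕ) (j : ℕ) : ℤ :=
  ⌊x * 10^j⌋ - (if tiebreak x s = 0 ∧ (∃ z : ℤ, x * 10^j = (z:ℝ)) then 1 else 0)

lemma Fabs_le (x : ℝ) (s : ℕ → ℕ) (j : ℕ) :
    (Fabs x s j : ℝ) ≤ x*10^j ∧ x*10^j ≤ (Fabs x s j : ℝ) + 1 := by
  unfold Fabs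
  have hfl : (⌊x*10^j⌋ : ℝ) ≤ x*10^j := Int.floor_le _
  have hfu : x*10^j < ⌊x*10^j⌋ + 1 := Int.lt_floor_add_one _
  split_ifs with h
  · obtain ⟨_, z, hz⟩ := h
    have e : ⌊x*10^j⌋ = z := by rw [hz]; exact Int.floor_intCast z
    rw [e, hz]
    push_cast
    constructor <;> linarith
  · push_cast
    constructor <;> linarith

lemma Fabs_digit (x : ℝ) (s : ℕ → ℕ) (j : ℕ) :
    0 ≤ Fabs x s (j+1) - 10 * Fabs x s j ∧ Fabs x s (j+1) - 10 * Fabs x s j ≤ 9 := by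
  have hy : x * 10^(j+1) = (x*10^j) * 10 := by rw [pow_succ]; ring
  unfold Fabs
  rw [hy]
  set y := x * 10^j with hydef
  have hfl : (⌊y⌋ : ℝ) ≤ y := Int.floor_le y
  have hfu : y < ⌊y⌋ + 1 := Int.lt_floor_add_one y
  have hfl10 : 10 * ⌊y⌋ ≤ ⌊y*10⌋ := by
    apply Int.le_floor.mpr
    push_cast
    linarith
  have hfu10 : ⌊y*10⌋ ≤ 10 * ⌊y⌋ + 9 := by
    have h1 : ⌊y*10⌋ < 10*⌊y⌋ + 10 := Int.floor_lt.mpr (by push_cast; linarith)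
    omega
  split_ifs with h2 h1 h1
  · -- both integer adjustments
    obtain ⟨ht, z, hz⟩ := h1
    have e1 : ⌊y⌋ = z := by rw [hz]; exact Int.floor_intCast z
    have e2 : ⌊y*10⌋ = 10*z := by
      rw [hz, show (z:ℝ)*10 = ((10*z : ℤ):ℝ) by push_cast; ring]
      exact Int.floor_intCast _
    omega
  · -- y*10 integer, y not
    obtain ⟨ht, z, hz⟩ := h2
    have e2 : ⌊y*10⌋ = z := by rw [hz]; exact Int.floor_intCast z
    have hstrict : (⌊y⌋:ℝ) < y := by
      rcases lt_or_eq_of_le hfl with h | h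
      · exact h
      · exact absurd ⟨ht, ⟨⌊y⌋, h.symm⟩⟩ h1
    have hz1 : 10*⌊y⌋ < z := by
      have hcast : ((10*⌊y⌋ : ℤ) : ℝ) < (z:ℝ) := by rw [← hz]; push_cast; linarith
      exact_mod_cast hcast
    omega
  · -- y integer but y*10 not: impossible
    exfalso
    obtain ⟨ht, z, hz⟩ := h1
    exact h2 ⟨ht, ⟨10*z, by rw [hz]; push_cast; ring⟩⟩
  · omega

lemma Fabs_sum (x : ℝ) (s : ℕ → ℕ) (J : ℕ) :
    ∑ n ∈ Finset.range J, ((Fabs x s (n+1) - 10 * Fabs x s n : ℤ) : ℝ) / 10^(n+1)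
      = (Fabs x s J : ℝ)/10^J - (Fabs x s 0 : ℝ) := by
  have key : ∀ n, ((Fabs x s (n+1) - 10 * Fabs x s n : ℤ) : ℝ) / 10^(n+1)
      = (Fabs x s (n+1) : ℝ)/10^(n+1) - (Fabs x s n : ℝ)/10^n := by
    intro n
    have hp : (10:ℝ)^(n+1) ≠ 0 := by positivity
    field_simp
    push_cast
    ring
  rw [Finset.sum_congr rfl (fun n _ => key n), Finset.sum_range_sub (fun n => (Fabs x s n : ℝ)/10^n)]
  norm_num

/-! ### Direction 2: (ρ→ρ₁₀) ≤W SEP₁ -/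

def canon (n : ℕ) : Prop := qcode (ratEnum n) = n

lemma canon_qcode (v : ℚ) : canon (qcode v) := by unfold canon; rw [ratEnum_qcode]

lemma canon_inj {a b : ℕ} (ha : canon a) (hb : canon b) (h : ratEnum a = ratEnum b) : a = b := by
  unfold canon at ha hb; rw [← ha, ← hb, h]

noncomputable def K2 (p : Baire) : Baire := pairB
  (fun i => if (¬ canon (Nat.unpair i).1) ∨
      ratEnum (Nat.unpair i).1 < ratEnum (p (Nat.unpair i).2) - ((2:ℚ)^((Nat.unpair i).2))⁻¹
    then (Nat.unpair i).1 + 1 else 0)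
  (fun i => if canon (Nat.unpair i).1 ∧
      ratEnum (p (Nat.unpair i).2) + ((2:ℚ)^((Nat.unpair i).2))⁻¹ < ratEnum (Nat.unpair i).1
    then (Nat.unpair i).1 + 1 else 0)

lemma rangeM_K2_fst {p : Baire} {x : ℝ} (hp : rhoCauchy p x) :
    rangeM (pfst (K2 p)) = {n | ¬ canon n ∨ (ratEnum n : ℝ) < x} := by
  rw [K2, pfst_pairB]
  ext n
  simp only [rangeM, Set.mem_setOf_eq]
  constructor
  · rintro ⟨i, hi⟩
    by_cases hc : (¬ canon (Nat.unpair i).1) ∨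
        ratEnum (Nat.unpair i).1 < ratEnum (p (Nat.unpair i).2) - ((2:ℚ)^((Nat.unpair i).2))⁻¹
    · rw [if_pos hc] at hi
      have hn : (Nat.unpair i).1 = n := by omega
      rw [hn] at hc
      rcases hc with hc | hc
      · exact Or.inl hc
      · right
        have hb := (rhoCauchy_bounds hp (Nat.unpair i).2).2
        have hc2 := (Rat.cast_lt (K := ℝ)).mpr hc
        push_cast at hc2
        linarith
    · rw [if_neg hc] at hi; omega
  · rintro (hnc | hx)
    · exact ⟨Nat.pair n 0, by rw [Nat.unpair_pair]; simp only; rw [if_pos (Or.inl hnc)]⟩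
    · obtain ⟨m, hm⟩ := exists_pow_lt_of_lt_one
        (show (0:ℝ) < (x - ratEnum n)/2 by linarith) (show (1/2:ℝ) < 1 by norm_num)
      have hhalf : (1/2:ℝ)^m = ((2:ℝ)^m)⁻¹ := by rw [one_div, inv_pow]
      have hb := (rhoCauchy_bounds hp m).1
      have hgoal : ((ratEnum n : ℚ) : ℝ) < (((ratEnum (p m) - ((2:ℚ)^m)⁻¹) : ℚ) : ℝ) := by
        push_cast
        rw [hhalf] at hm; linarith
      refine ⟨Nat.pair n m, ?_⟩
      rw [Nat.unpair_pair]
      simp only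
      rw [if_pos (Or.inr (by exact_mod_cast hgoal))]

lemma rangeM_K2_snd {p : Baire} {x : ℝ} (hp : rhoCauchy p x) :
    rangeM (psnd (K2 p)) = {n | canon n ∧ x < (ratEnum n : ℝ)} := by
  rw [K2, psnd_pairB]
  ext n
  simp only [rangeM, Set.mem_setOf_eq]
  constructor
  · rintro ⟨i, hi⟩
    by_cases hc : canon (Nat.unpair i).1 ∧
        ratEnum (p (Nat.unpair i).2) + ((2:ℚ)^((Nat.unpair i).2))⁻¹ < ratEnum (Nat.unpair i).1
    · rw [if_pos hc] at hi
      have hn : (Nat.unpair i).1 = n := by omega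
      rw [hn] at hc
      refine ⟨hc.1, ?_⟩
      have hb := (rhoCauchy_bounds hp (Nat.unpair i).2).1
      have hc2 := (Rat.cast_lt (K := ℝ)).mpr hc.2
      push_cast at hc2
      linarith
    · rw [if_neg hc] at hi; omega
  · rintro ⟨hcan, hx⟩
    obtain ⟨m, hm⟩ := exists_pow_lt_of_lt_one
      (show (0:ℝ) < (ratEnum n - x)/2 by linarith) (show (1/2:ℝ) < 1 by norm_num)
    have hhalf : (1/2:ℝ)^m = ((2:ℝ)^m)⁻¹ := by rw [one_div, inv_pow]
    have hb := (rhoCauchy_bounds hp m).2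
    have hgoal : (((ratEnum (p m) + ((2:ℚ)^m)⁻¹) : ℚ) : ℝ) < ((ratEnum n : ℚ) : ℝ) := by
      push_cast
      rw [hhalf] at hm; linarith
    refine ⟨Nat.pair n m, ?_⟩
    rw [Nat.unpair_pair]
    simp only
    rw [if_pos ⟨hcan, by exact_mod_cast hgoal⟩]

lemma K2_mem_dom {p : Baire} {x : ℝ} (hp : rhoCauchy p x) : K2 p ∈ SEP1.dom := by
  constructor
  · rw [rangeM_K2_fst hp, rangeM_K2_snd hp]
    rw [Set.eq_empty_iff_forall_notMem]
    rintro n ⟨hn1, hn2⟩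
    have h2 : canon n ∧ x < (ratEnum n : ℝ) := hn2
    rcases (hn1 : ¬ canon n ∨ (ratEnum n : ℝ) < x) with h1 | h1
    · exact h1 h2.1
    · linarith [h2.2]
  · rw [rangeM_K2_fst hp, rangeM_K2_snd hp]
    rw [Set.encard_le_one_iff]
    intro a b ha hb
    simp only [Set.mem_compl_iff, Set.mem_union, Set.mem_setOf_eq, not_or, not_and, not_lt,
      not_not] at ha hb
    obtain ⟨⟨hca, hax⟩, hax2⟩ := ha
    obtain ⟨⟨hcb, hbx⟩, hbx2⟩ := hb
    have hea : ((ratEnum a : ℚ):ℝ) = x := le_antisymm (hax2 hca) hax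
    have heb : ((ratEnum b : ℚ):ℝ) = x := le_antisymm (hbx2 hcb) hbx
    exact canon_inj hca hcb (Rat.cast_injective (hea.trans heb.symm))

noncomputable def kc (z : Baire) (j : ℕ) : ℤ :=
  ⌈(ratEnum (pfst z (4*j+4)) - ((2:ℚ)^(4*j+4))⁻¹) * 10^j⌉

noncomputable def eidx (z : Baire) (j : ℕ) : ℕ := qcode ((kc z j : ℚ)/10^j)

noncomputable def Fc (z : Baire) (j : ℕ) : ℤ :=
  if (ratEnum (pfst z (4*j+4)) + ((2:ℚ)^(4*j+4))⁻¹) * 10^j < (kc z j : ℚ) then kc z j - 1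
  else if psnd z (eidx z j) = 1 then kc z j else kc z j - 1

noncomputable def H2 (z : Baire) : Baire := fun j =>
  if j = 0 then Encodable.encode (Fc z 0) else (Fc z j - 10 * Fc z (j-1)).toNat

lemma tiebreak_eq {x : ℝ} (s : ℕ → ℕ) {v : ℚ} (hv : (v:ℝ) = x) {j : ℕ} {z : ℤ}
    (hz : (v * 10^j : ℚ) = (z:ℚ)) :
    tiebreak x s = s (qcode v) := by
  unfold tiebreak
  have hex : ∃ v' : ℚ, ((v':ℝ) = x ∧ ∃ j : ℕ, ∃ z : ℤ, (v' * 10^j : ℚ) = z) := ⟨v, hv, j, z, hz⟩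
  rw [dif_pos hex]
  have h1 : (hex.choose : ℝ) = x := hex.choose_spec.1
  have h2 : hex.choose = v := Rat.cast_injective (h1.trans hv.symm)
  rw [h2]

lemma Fc_eq {p s : Baire} {x : ℝ} (hp : rhoCauchy p x)
    (hs1 : ∀ n, canon n → s n = 1 → (ratEnum n : ℝ) ≤ x)
    (hs0 : ∀ n, s n ≠ 1 → x ≤ (ratEnum n : ℝ))
    (hs01 : ∀ n, s n = 0 ∨ s n = 1) (j : ℕ) :
    Fc (pairB p s) j = Fabs x s j := by
  have hkc : kc (pairB p s) j = ⌈(ratEnum (p (4*j+4)) - ((2:ℚ)^(4*j+4))⁻¹) * 10^j⌉ := by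
    unfold kc; rw [pfst_pairB]
  unfold Fc eidx
  rw [pfst_pairB, psnd_pairB, hkc]
  set m := 4*j+4 with hmdef
  set ρ := ratEnum (p m) with hρ
  set k : ℤ := ⌈(ρ - ((2:ℚ)^m)⁻¹) * 10^j⌉ with hk
  have hb := rhoCauchy_bounds hp m
  have hcast1 : (((ρ - ((2:ℚ)^m)⁻¹) * 10^j : ℚ) : ℝ) = ((ρ:ℚ):ℝ)*10^j - ((2:ℝ)^m)⁻¹*10^j := by
    push_cast
    ring
  have hcast2 : (((ρ + ((2:ℚ)^m)⁻¹) * 10^j : ℚ) : ℝ) = ((ρ:ℚ):ℝ)*10^j + ((2:ℝ)^m)⁻¹*10^j := by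
    push_cast
    ring
  have hxL : (((ρ - ((2:ℚ)^m)⁻¹) * 10^j : ℚ) : ℝ) ≤ x * 10^j := by
    rw [hcast1]
    have h2 := hb.2
    nlinarith [pow_pos (show (0:ℝ) < 10 by norm_num) j, pow_pos (show (0:ℝ) < 2 by norm_num) m]
  have hxU : x * 10^j ≤ (((ρ + ((2:ℚ)^m)⁻¹) * 10^j : ℚ) : ℝ) := by
    rw [hcast2]
    have h1 := hb.1
    nlinarith [pow_pos (show (0:ℝ) < 10 by norm_num) j, pow_pos (show (0:ℝ) < 2 by norm_num) m]
  have hwidth : ((ρ + ((2:ℚ)^m)⁻¹) * 10^j : ℚ) - ((ρ - ((2:ℚ)^m)⁻¹) * 10^j : ℚ) ≤ 1/8 := by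
    have h10 : (10:ℚ)^j ≤ (2:ℚ)^(4*j) := by
      calc (10:ℚ)^j ≤ (16:ℚ)^j := pow_le_pow_left₀ (by norm_num) (by norm_num) j
        _ = (2:ℚ)^(4*j) := by rw [pow_mul]; norm_num
    have he : ((ρ + ((2:ℚ)^m)⁻¹) * 10^j : ℚ) - ((ρ - ((2:ℚ)^m)⁻¹) * 10^j : ℚ)
        = 2 * ((2:ℚ)^m)⁻¹ * 10^j := by ring
    rw [he, hmdef]
    calc 2 * ((2:ℚ)^(4*j+4))⁻¹ * 10^j ≤ 2 * ((2:ℚ)^(4*j+4))⁻¹ * 2^(4*j) := by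
          apply mul_le_mul_of_nonneg_left h10 (by positivity)
      _ = 1/8 := by rw [pow_add]; field_simp; ring
  have hLk : ((ρ - ((2:ℚ)^m)⁻¹) * 10^j : ℚ) ≤ (k:ℚ) := Int.le_ceil _
  have hkL : (k:ℚ) < ((ρ - ((2:ℚ)^m)⁻¹) * 10^j : ℚ) + 1 := Int.ceil_lt_add_one _
  have hxlow : (k:ℝ) - 1 < x*10^j := by
    have hc : ((k:ℚ):ℝ) < (((ρ - ((2:ℚ)^m)⁻¹) * 10^j : ℚ):ℝ) + 1 := by exact_mod_cast hkL
    push_cast at hc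
    linarith
  split_ifs with hcase hbit
  · -- U < k
    have h2 : x*10^j < (k:ℝ) := by
      have hc : (((ρ + ((2:ℚ)^m)⁻¹) * 10^j : ℚ):ℝ) < ((k:ℚ):ℝ) := by exact_mod_cast hcase
      push_cast at hc
      rw [hcast2] at hxU
      push_cast at hxU
      linarith
    have hfloor : ⌊x*10^j⌋ = k - 1 := by
      rw [Int.floor_eq_iff]
      constructor
      · push_cast; linarith
      · push_cast; linarith
    have hnoint : ¬ ∃ z:ℤ, x*10^j = (z:ℝ) := by
      rintro ⟨z, hz⟩
      rw [hz] at hxlow h2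
      have e1 : k - 1 < z := by exact_mod_cast hxlow
      have e2 : z < k := by exact_mod_cast h2
      omega
    unfold Fabs
    rw [hfloor, if_neg (fun hc => hnoint hc.2)]
    ring
  · -- k ≤ U, bit = 1
    have hUk : ((ρ + ((2:ℚ)^m)⁻¹) * 10^j : ℚ) < (k:ℚ) + 1 := by
      push_neg at hcase
      linarith
    have hxup : x*10^j < (k:ℝ) + 1 := by
      have hc : (((ρ + ((2:ℚ)^m)⁻¹) * 10^j : ℚ):ℝ) < ((k:ℚ):ℝ) + 1 := by exact_mod_cast hUk
      push_cast at hc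
      linarith
    have hre : ratEnum (qcode ((k:ℚ)/10^j)) = (k:ℚ)/10^j := ratEnum_qcode _
    have hxk : (k:ℝ) ≤ x * 10^j := by
      have h1 := hs1 _ (canon_qcode _) hbit
      rw [hre] at h1
      have heq2 : (((k:ℚ)/10^j : ℚ) : ℝ) = (k:ℝ)/10^j := by push_cast; ring
      rw [heq2] at h1
      calc (k:ℝ) = (k:ℝ)/10^j * 10^j := by field_simp
        _ ≤ x * 10^j := mul_le_mul_of_nonneg_right h1 (by positivity)
    rcases eq_or_lt_of_le hxk with heq | hlt
    · have hfloor : ⌊x*10^j⌋ = k := by rw [← heq]; exact Int.floor_intCast k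
      have hveq : (((k:ℚ)/10^j : ℚ) : ℝ) = x := by
        push_cast
        rw [div_eq_iff (by positivity : (10:ℝ)^j ≠ 0)]
        exact heq
      have hzq : (((k:ℚ)/10^j) * 10^j : ℚ) = ((k:ℤ):ℚ) := by field_simp
      have htb : tiebreak x s = s (qcode ((k:ℚ)/10^j)) := tiebreak_eq s hveq hzq
      unfold Fabs
      rw [hfloor, if_neg ?_]
      · ring
      · rintro ⟨h0, -⟩
        rw [htb, hbit] at h0
        exact one_ne_zero h0

    · have hfloor : ⌊x*10^j⌋ = k := by
        rw [Int.floor_eq_iff]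
        exact ⟨le_of_lt hlt, by push_cast; linarith⟩
      have hnoint : ¬ ∃ z:ℤ, x*10^j = (z:ℝ) := by
        rintro ⟨z, hz⟩
        rw [hz] at hlt hxup
        have e1 : k < z := by exact_mod_cast hlt
        have e2 : z < k + 1 := by exact_mod_cast hxup
        omega
      unfold Fabs
      rw [hfloor, if_neg (fun hc => hnoint hc.2)]
      ring
  · -- k ≤ U, bit ≠ 1
    have hre : ratEnum (qcode ((k:ℚ)/10^j)) = (k:ℚ)/10^j := ratEnum_qcode _
    have hxk : x*10^j ≤ (k:ℝ) := by
      have h1 := hs0 _ hbit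
      rw [hre] at h1
      have heq2 : (((k:ℚ)/10^j : ℚ) : ℝ) = (k:ℝ)/10^j := by push_cast; ring
      rw [heq2] at h1
      calc x*10^j ≤ (k:ℝ)/10^j * 10^j := mul_le_mul_of_nonneg_right h1 (by positivity)
        _ = (k:ℝ) := by field_simp
    rcases lt_or_eq_of_le hxk with hlt | heq
    · have hfloor : ⌊x*10^j⌋ = k - 1 := by
        rw [Int.floor_eq_iff]
        constructor
        · push_cast; linarith
        · push_cast; linarith
      have hnoint : ¬ ∃ z:ℤ, x*10^j = (z:ℝ) := by
        rintro ⟨z, hz⟩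
        rw [hz] at hlt hxlow
        have e1 : z < k := by exact_mod_cast hlt
        have e2 : k - 1 < z := by exact_mod_cast hxlow
        omega
      unfold Fabs
      rw [hfloor, if_neg (fun hc => hnoint hc.2)]
      ring
    · have hfloor : ⌊x*10^j⌋ = k := by rw [heq]; exact Int.floor_intCast k
      have hveq : (((k:ℚ)/10^j : ℚ) : ℝ) = x := by
        push_cast
        rw [div_eq_iff (by positivity : (10:ℝ)^j ≠ 0)]
        exact heq.symm
      have hzq : (((k:ℚ)/10^j) * 10^j : ℚ) = ((k:ℤ):ℚ) := by field_simp
      have htb : tiebreak x s = s (qcode ((k:ℚ)/10^j)) := tiebreak_eq s hveq hzq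
      have hsz : s (qcode ((k:ℚ)/10^j)) = 0 := (hs01 _).resolve_right hbit
      unfold Fabs
      rw [hfloor, if_pos ⟨by rw [htb, hsz], ⟨k, heq⟩⟩]

lemma chi_eq_ite (A : Set ℕ) (n : ℕ) : chi A n = if n ∈ A then 1 else 0 := by
  unfold chi; rw [Set.indicator_apply]

lemma H2_correct {p s : Baire} {x : ℝ} (hp : rhoCauchy p x)
    (hs1 : ∀ n, canon n → s n = 1 → (ratEnum n : ℝ) ≤ x)
    (hs0 : ∀ n, s n ≠ 1 → x ≤ (ratEnum n : ℝ))
    (hs01 : ∀ n, s n = 0 ∨ s n = 1) :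
    rhoDec (H2 (pairB p s)) x := by
  have hFc : ∀ j, Fc (pairB p s) j = Fabs x s j := Fc_eq hp hs1 hs0 hs01
  constructor
  · intro n hn
    have h0 : H2 (pairB p s) n = (Fabs x s n - 10*Fabs x s (n-1)).toNat := by
      unfold H2
      rw [if_neg (by omega), hFc, hFc]
    rw [h0]
    have hd := Fabs_digit x s (n-1)
    have hn1 : n - 1 + 1 = n := by omega
    rw [hn1] at hd
    omega
  · have hint : (Denumerable.ofNat ℤ (H2 (pairB p s) 0) : ℤ) = Fabs x s 0 := by
      unfold H2
      rw [if_pos rfl, hFc, Denumerable.ofNat_encode]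
    rw [hint]
    set d : ℕ → ℝ := fun n => ((Fabs x s (n+1) - 10*Fabs x s n : ℤ) : ℝ)/10^(n+1) with hd
    have hdig : ∀ n:ℕ, ((H2 (pairB p s) (n+1) : ℕ) : ℝ)/10^(n+1) = d n := by
      intro n
      unfold H2
      rw [if_neg (by omega), hFc, hFc]
      simp only [Nat.add_sub_cancel]
      have h1 := (Fabs_digit x s n).1
      rw [hd]
      simp only
      congr 1
      exact_mod_cast Int.toNat_of_nonneg h1
    have hsum : Summable d := by
      apply summable_of_geom_bound d (9/10)
      intro k
      have hd9 := Fabs_digit x s k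
      have hnum0 : (0:ℝ) ≤ ((Fabs x s (k+1) - 10*Fabs x s k : ℤ) : ℝ) := by
        exact_mod_cast hd9.1
      have hnum9 : ((Fabs x s (k+1) - 10*Fabs x s k : ℤ) : ℝ) ≤ 9 := by
        exact_mod_cast hd9.2
      rw [hd]
      simp only
      rw [abs_of_nonneg (div_nonneg hnum0 (by positivity))]
      rw [div_le_iff₀ (by positivity)]
      have he : (9/10:ℝ) * (1/10)^k * 10^(k+1) = 9 := by
        rw [div_pow, one_pow]; field_simp; ring
      rw [he]; exact hnum9
    have htel : ∀ J, ∑ n ∈ Finset.range J, d n = (Fabs x s J : ℝ)/10^J - (Fabs x s 0 : ℝ) :=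
      Fabs_sum x s
    have hlim : Tendsto (fun J:ℕ => (Fabs x s J:ℝ)/10^J) atTop (𝓝 x) := by
      apply tendsto_of_tendsto_of_tendsto_of_le_of_le
        (g := fun J:ℕ => x - (1/10:ℝ)^J) (h := fun _:ℕ => x)
      · have hgeo : Tendsto (fun J:ℕ => (1/10:ℝ)^J) atTop (𝓝 0) :=
          tendsto_pow_atTop_nhds_zero_of_lt_one (by norm_num) (by norm_num)
        have h2 := (tendsto_const_nhds (x := x) (f := (atTop : Filter ℕ))).sub hgeo
        simpa using h2
      · exact tendsto_const_nhds
      · intro J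
        have hb := Fabs_le x s J
        have hp10 : (0:ℝ) < 10^J := by positivity
        rw [le_div_iff₀ hp10]
        have hone : (1/10:ℝ)^J * 10^J = 1 := by
          rw [div_pow, one_pow]; field_simp
        nlinarith [hb.2]
      · intro J
        have hb := Fabs_le x s J
        have hp10 : (0:ℝ) < 10^J := by positivity
        rw [div_le_iff₀ hp10]
        exact hb.1
    have htends : Tendsto (fun J => ∑ n ∈ Finset.range J, d n) atTop (𝓝 (x - (Fabs x s 0 : ℝ))) :=
      Tendsto.congr (fun J => (htel J).symm) (hlim.sub tendsto_const_nhds)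
    have huniq : ∑' n, d n = x - (Fabs x s 0 : ℝ) :=
      tendsto_nhds_unique hsum.hasSum.tendsto_sum_nat htends
    have hco : ∑' n, ((H2 (pairB p s) (n+1) : ℕ) : ℝ)/10^(n+1) = ∑' n, d n :=
      tsum_congr (fun n => hdig n)
    rw [hco, huniq]
    ring

lemma Fc_congr {z z' : Baire} (j : ℕ)
    (h1 : z' (2*(4*j+4)) = z (2*(4*j+4)))
    (h2 : z' (2*(eidx z j)+1) = z (2*(eidx z j)+1)) : Fc z' j = Fc z j := by
  have hp : pfst z' (4*j+4) = pfst z (4*j+4) := h1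
  have hkc : kc z' j = kc z j := by unfold kc; rw [hp]
  have hei : eidx z' j = eidx z j := by unfold eidx; rw [hkc]
  have hs : psnd z' (eidx z' j) = psnd z (eidx z j) := by
    rw [hei]; exact h2
  unfold Fc
  rw [hp, hkc, hs]

lemma wred2 : WRed (implProblem rhoCauchy rhoDec) SEP1 := by
  refine ⟨Set.univ, Set.univ, K2, H2, ?_, ?_, ?_⟩
  · apply continuousOn_of_prefix
    intro z _ n
    refine ⟨(Nat.unpair (n/2)).2 + 1, ?_⟩
    intro z' hz'
    have he : z' ((Nat.unpair (n/2)).2) = z ((Nat.unpair (n/2)).2) := hz' _ (by omega)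
    simp only [K2, pairB]
    rw [he]
  · apply continuousOn_of_prefix
    intro z _ j
    refine ⟨(2*(4*j+4)+1) + (2*(4*(j-1)+4)+1) + (2*(eidx z j)+2) + (2*(eidx z (j-1))+2), ?_⟩
    intro z' hz'
    have c1 : Fc z' j = Fc z j := Fc_congr j (hz' _ (by omega)) (hz' _ (by omega))
    have c2 : Fc z' (j-1) = Fc z (j-1) := Fc_congr (j-1) (hz' _ (by omega)) (hz' _ (by omega))
    unfold H2
    by_cases h0 : j = 0
    · subst h0
      rw [if_pos rfl, if_pos rfl, c1]
    · rw [if_neg h0, if_neg h0, c1, c2]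
  · intro p hp0
    obtain ⟨x, hx⟩ := hp0
    refine ⟨trivial, K2_mem_dom hx, ?_⟩
    intro q hq
    refine ⟨trivial, ?_⟩
    obtain ⟨A, hqA, hsub1, hsub2⟩ := hq
    have hq1 : ∀ n, q n = 1 ↔ n ∈ A := by
      intro n
      rw [hqA, chi_eq_ite]
      split_ifs with h <;> simp [h]
    have hs01 : ∀ n, q n = 0 ∨ q n = 1 := by
      intro n
      rw [hqA, chi_eq_ite]
      split_ifs <;> simp
    have hs1 : ∀ n, canon n → q n = 1 → (ratEnum n : ℝ) ≤ x := by
      intro n hc h1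
      have hA : n ∈ A := (hq1 n).mp h1
      have hmem := hsub2 hA
      rw [rangeM_K2_snd hx] at hmem
      simp only [Set.mem_compl_iff, Set.mem_setOf_eq, not_and, not_lt] at hmem
      exact hmem hc
    have hs0 : ∀ n, q n ≠ 1 → x ≤ (ratEnum n : ℝ) := by
      intro n h1
      have hA : n ∉ A := fun h => h1 ((hq1 n).mpr h)
      have hnr : n ∉ rangeM (pfst (K2 p)) := fun h => hA (hsub1 h)
      rw [rangeM_K2_fst hx] at hnr
      simp only [Set.mem_setOf_eq, not_or, not_lt, not_not] at hnr
      exact hnr.2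
    exact ⟨x, hx, H2_correct hx hs1 hs0 hs01⟩

/-! ### Direction 1: SEP₁ ≤W (ρ→ρ₁₀) -/

def DecBy (p q : Baire) (n k : ℕ) : Prop := ∃ i, i < k ∧ (p i = n+1 ∨ q i = n+1)

lemma DecBy_mono {p q : Baire} {n k k' : ℕ} (h : k ≤ k') (hd : DecBy p q n k) :
    DecBy p q n k' := by
  obtain ⟨i, hi, hc⟩ := hd
  exact ⟨i, by omega, hc⟩

lemma exists_undecided (p q : Baire) (k : ℕ) : ∃ n, ¬ DecBy p q n k := by
  refine ⟨(Finset.range k).sup (fun i => p i + q i), ?_⟩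
  rintro ⟨i, hik, hc⟩
  have hle : p i + q i ≤ (Finset.range k).sup (fun i => p i + q i) :=
    Finset.le_sup (f := fun i => p i + q i) (Finset.mem_range.mpr hik)
  rcases hc with h | h <;> omega

noncomputable def uu (p q : Baire) (k : ℕ) : ℕ := Nat.find (exists_undecided p q k)

lemma uu_spec (p q : Baire) (k : ℕ) : ¬ DecBy p q (uu p q k) k := by
  unfold uu; exact Nat.find_spec (exists_undecided p q k)

lemma uu_le {p q : Baire} {n k : ℕ} (h : ¬ DecBy p q n k) : uu p q k ≤ n := by
  unfold uu; exact Nat.find_min' (exists_undecided p q k) h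

lemma uu_lt {p q : Baire} {m k : ℕ} (h : m < uu p q k) : DecBy p q m k := by
  unfold uu at h
  exact not_not.mp (Nat.find_min (exists_undecided p q k) h)

lemma uu_mono {p q : Baire} {k k' : ℕ} (h : k ≤ k') : uu p q k ≤ uu p q k' :=
  uu_le (fun hd => uu_spec p q k' (DecBy_mono h hd))

noncomputable def dd (p q : Baire) (k : ℕ) : ℤ :=
  if uu p q (k+1) = uu p q k then 0
  else if ∃ i, i < k+1 ∧ p i = uu p q k + 1 then 3 else -3

noncomputable def Tint (p q : Baire) : ℕ → ℤ
  | 0 => 5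
  | k+1 => 10 * Tint p q k + dd p q k

lemma dd_abs (p q : Baire) (k : ℕ) : |dd p q k| ≤ 3 := by
  unfold dd
  split_ifs <;> norm_num

noncomputable def fT (p q : Baire) (k : ℕ) : ℝ := (Tint p q k : ℝ)/10^(k+1)

lemma fT_zero (p q : Baire) : fT p q 0 = 1/2 := by
  unfold fT Tint
  norm_num

lemma fT_succ_sub (p q : Baire) (k : ℕ) :
    fT p q (k+1) - fT p q k = (dd p q k : ℝ)/10^(k+2) := by
  unfold fT
  show ((Tint p q (k+1) : ℤ) : ℝ)/10^(k+1+1) - _ = _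
  rw [show Tint p q (k+1) = 10 * Tint p q k + dd p q k from rfl]
  push_cast
  have h1 : (10:ℝ)^(k+1+1) ≠ 0 := by positivity
  have h2 : (10:ℝ)^(k+1) ≠ 0 := by positivity
  have h3 : (10:ℝ)^(k+2) ≠ 0 := by positivity
  field_simp
  ring

noncomputable def xr (p q : Baire) : ℝ := 1/2 + ∑' k, (dd p q k : ℝ)/10^(k+2)

lemma dd_term_bound (p q : Baire) (k : ℕ) :
    |(dd p q k : ℝ)/10^(k+2)| ≤ (3/100) * (1/10)^k := by
  have h1 : |(dd p q k : ℝ)| ≤ 3 := by exact_mod_cast dd_abs p q k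
  rw [abs_div]
  have h2 : |(10:ℝ)^(k+2)| = 10^(k+2) := abs_of_pos (by positivity)
  rw [h2, div_le_iff₀ (by positivity)]
  have he : (3/100:ℝ) * (1/10)^k * 10^(k+2) = 3 := by
    rw [div_pow, one_pow]; field_simp; ring
  rw [he]; exact h1

lemma summable_dd (p q : Baire) : Summable (fun k => (dd p q k : ℝ)/10^(k+2)) :=
  summable_of_geom_bound _ (3/100) (dd_term_bound p q)

lemma fT_partial (p q : Baire) (K : ℕ) :
    ∑ k ∈ Finset.range K, (dd p q k : ℝ)/10^(k+2) = fT p q K - 1/2 := by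
  rw [Finset.sum_congr rfl (fun k _ => (fT_succ_sub p q k).symm),
    Finset.sum_range_sub (fT p q), fT_zero]

lemma xr_tail (p q : Baire) (K : ℕ) : |xr p q - fT p q K| ≤ (1/10:ℝ)^(K+1)/3 := by
  have hsum := summable_dd p q
  have hsplit := Summable.sum_add_tsum_nat_add K hsum
  have h1 : xr p q - fT p q K = ∑' k, (dd p q (k+K) : ℝ)/10^(k+K+2) := by
    unfold xr
    rw [← hsplit, fT_partial]
    ring
  rw [h1]
  have hb : ∀ k, |(dd p q (k+K) : ℝ)/10^(k+K+2)| ≤ ((3/100) * (1/10)^K) * (1/10)^k := by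
    intro k
    have := dd_term_bound p q (k+K)
    calc |(dd p q (k+K) : ℝ)/10^(k+K+2)| ≤ (3/100) * (1/10)^(k+K) := this
      _ = ((3/100) * (1/10)^K) * (1/10)^k := by rw [pow_add]; ring
  have := tsum_abs_le_geom _ _ hb
  calc |∑' k, (dd p q (k+K) : ℝ)/10^(k+K+2)| ≤ ((3/100) * (1/10)^K) * (10/9) := this
    _ = (1/10:ℝ)^(K+1)/3 := by rw [pow_succ]; ring

lemma K1_bound (p q : Baire) (K : ℕ) : |xr p q - fT p q K| ≤ (1/10:ℝ)^(K+1) :=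
  le_trans (xr_tail p q K) (by nlinarith [pow_pos (show (0:ℝ) < 1/10 by norm_num) (K+1)])

noncomputable def K1 (r : Baire) : Baire :=
  fun m => qcode ((Tint (pfst r) (psnd r) (m+2) : ℚ)/10^(m+3))

lemma K1_rho (r : Baire) : rhoCauchy (K1 r) (xr (pfst r) (psnd r)) := by
  intro m
  set p := pfst r
  set q := psnd r
  have he : (ratEnum (K1 r m) : ℝ) = fT p q (m+2) := by
    unfold K1
    rw [ratEnum_qcode]
    unfold fT
    push_cast
    norm_num
    rfl
  rw [he]
  have hb := xr_tail p q (m+2)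
  have h2 : (2:ℝ)^(-(m:ℤ)) = ((2:ℝ)^m)⁻¹ := by rw [zpow_neg, zpow_natCast]
  rw [abs_sub_comm, h2]
  have h3 : (1/10:ℝ)^(m+3)/3 ≤ ((2:ℝ)^m)⁻¹ := by
    have h4 : (1/10:ℝ)^(m+3) ≤ (1/10)^m :=
      pow_le_pow_of_le_one (by norm_num) (by norm_num) (by omega)
    have h5 : (1/10:ℝ)^m ≤ (1/2)^m := pow_le_pow_left₀ (by norm_num) (by norm_num) m
    have h6 : (1/2:ℝ)^m = ((2:ℝ)^m)⁻¹ := by rw [one_div, inv_pow]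
    nlinarith [pow_pos (show (0:ℝ) < 1/10 by norm_num) (m+3)]
  linarith [hb]

lemma fT_const {p q : Baire} {n jm w : ℕ} (hjm : uu p q jm = n) (hw : uu p q w = n)
    (hle : jm ≤ w) : fT p q w = fT p q jm := by
  have key : ∀ j, jm ≤ j → j ≤ w → fT p q j = fT p q jm := by
    intro j
    induction j with
    | zero => intro h1 _; have : jm = 0 := by omega
              rw [this]
    | succ i ih =>
      intro h1 h2
      rcases Nat.lt_or_ge jm (i+1) with h | h
      · have hi1 : jm ≤ i := by omega
        have hi2 : i ≤ w := by omega
        have hui : uu p q i = n :=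
          le_antisymm (hw ▸ uu_mono hi2) (hjm ▸ uu_mono hi1)
        have hui1 : uu p q (i+1) = n :=
          le_antisymm (hw ▸ uu_mono h2) (hjm ▸ uu_mono (by omega : jm ≤ i+1))
        have hdd : dd p q i = 0 := by
          unfold dd
          rw [if_pos (by rw [hui, hui1])]
        have hs := fT_succ_sub p q i
        rw [hdd] at hs
        norm_num at hs
        have h0 : fT p q (i+1) = fT p q i := by linarith
        rw [h0]
        exact ih hi1 hi2
      · have : jm = i+1 := by omega
        rw [← this]
  exact key w hle le_rfl

lemma event_bounds {p q : Baire} (hdisj : ∀ n, ¬(n ∈ rangeM p ∧ n ∈ rangeM q))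
    {n jm : ℕ} (hjm : uu p q jm = n)
    (hdec : ∃ i, p i = n+1 ∨ q i = n+1) :
    (n ∈ rangeM p → fT p q jm < xr p q ∧ xr p q < fT p q jm + (1/10:ℝ)^(jm+1)) ∧
    (n ∈ rangeM q → fT p q jm - (1/10:ℝ)^(jm+1) < xr p q ∧ xr p q < fT p q jm) := by
  classical
  set w := Nat.find hdec with hwdef
  have hw_spec : p w = n+1 ∨ q w = n+1 := Nat.find_spec hdec
  have hw_min : ∀ i, i < w → ¬(p i = n+1 ∨ q i = n+1) := fun i hi => Nat.find_min hdec hi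
  have hjmw : jm ≤ w := by
    by_contra hc
    push_neg at hc
    exact (hjm ▸ uu_spec p q jm) ⟨w, hc, hw_spec⟩
  have huw : uu p q w = n := by
    refine le_antisymm (uu_le ?_) (hjm ▸ uu_mono hjmw)
    rintro ⟨i, hi, hc⟩
    exact hw_min i hi hc
  have huw1 : uu p q (w+1) ≠ uu p q w := by
    rw [huw]
    intro he
    exact (he ▸ uu_spec p q (w+1)) ⟨w, by omega, hw_spec⟩
  have hconst : fT p q w = fT p q jm := fT_const hjm huw hjmw
  have htail := xr_tail p q (w+1)
  have hstep := fT_succ_sub p q w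
  rw [abs_le] at htail
  set E : ℝ := (1/10:ℝ)^(w+2) with hE
  have hEpos : 0 < E := by positivity
  have hEeq : (1/10:ℝ)^(w+1+1)/3 = E/3 := rfl
  have h10E : (1/10:ℝ)^(w+1) = 10 * E := by
    rw [hE, pow_succ]
    ring
  have hmono : (1/10:ℝ)^(w+1) ≤ (1/10)^(jm+1) :=
    pow_le_pow_of_le_one (by norm_num) (by norm_num) (by omega)
  have hEe : (1/10:ℝ)^(w+1+1)/3 = E/3 := rfl
  rw [hEe] at htail
  refine ⟨fun hA => ?_, fun hB => ?_⟩
  · -- n enumerated into the left side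
    have hpw : p w = n+1 := by
      rcases hw_spec with h | h
      · exact h
      · exact absurd ⟨hA, ⟨w, h⟩⟩ (hdisj n)
    have hside : ∃ i, i < w+1 ∧ p i = uu p q w + 1 :=
      ⟨w, by omega, by rw [huw]; exact hpw⟩
    have hdd : dd p q w = 3 := by
      unfold dd
      rw [if_neg huw1, if_pos hside]
    rw [hdd] at hstep
    push_cast at hstep
    have h3E : (3:ℝ)/10^(w+2) = 3*E := by
      rw [hE, div_pow, one_pow]
      ring
    rw [h3E] at hstep
    constructor
    · linarith [htail.1, hEpos]
    · have h1 : xr p q ≤ fT p q jm + (10/3)*E := by linarith [htail.2]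
      have h2 : fT p q jm + (10/3)*E < fT p q jm + 10*E := by linarith [hEpos]
      linarith [h10E ▸ hmono]
  · -- n enumerated into the right side
    have hqw : q w = n+1 := by
      rcases hw_spec with h | h
      · exact absurd ⟨⟨w, h⟩, hB⟩ (hdisj n)
      · exact h
    have hside : ¬ ∃ i, i < w+1 ∧ p i = uu p q w + 1 := by
      rintro ⟨i, hi, hpi⟩
      rw [huw] at hpi
      rcases Nat.lt_or_ge i w with h | h
      · exact hw_min i h (Or.inl hpi)
      · have hiw : i = w := by omega
        rw [hiw] at hpi
        exact hdisj n ⟨⟨w, hpi⟩, hB⟩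
    have hdd : dd p q w = -3 := by
      unfold dd
      rw [if_neg huw1, if_neg hside]
    rw [hdd] at hstep
    push_cast at hstep
    have h3E : (-3:ℝ)/10^(w+2) = -(3*E) := by
      rw [hE, div_pow, one_pow]
      ring
    rw [h3E] at hstep
    constructor
    · have h1 : fT p q jm - 10*E < xr p q := by linarith [htail.1, hEpos]
      linarith [h10E ▸ hmono]
    · linarith [htail.2, hEpos]

noncomputable def H1' (p q y : Baire) : Baire := fun n =>
  if h : ∃ j, (p j = n+1 ∨ q j = n+1 ∨ uu p q j = n) then
    if p (Nat.find h) = n+1 then 1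
    else if q (Nat.find h) = n+1 then 0
    else if Tint p q (Nat.find h) ≤ decTrunc y (Nat.find h + 1) then 1 else 0
  else 0

noncomputable def H1 (z : Baire) : Baire := H1' (pfst (pfst z)) (psnd (pfst z)) (psnd z)

lemma H1'_vals (p q y : Baire) (n : ℕ) : H1' p q y n = 0 ∨ H1' p q y n = 1 := by
  unfold H1'
  split_ifs <;> simp

lemma H1'_one {p q y : Baire} (hdisj : ∀ n, ¬(n ∈ rangeM p ∧ n ∈ rangeM q))
    (hy : rhoDec y (xr p q)) {n : ℕ} (hn : n ∈ rangeM p) : H1' p q y n = 1 := by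
  obtain ⟨i0, hi0⟩ := hn
  have hex : ∃ j, (p j = n+1 ∨ q j = n+1 ∨ uu p q j = n) := ⟨i0, Or.inl hi0⟩
  unfold H1'
  rw [dif_pos hex]
  have hspec := Nat.find_spec hex
  split_ifs with h1 h2 h3
  · rfl
  · exact absurd ⟨⟨i0, hi0⟩, ⟨Nat.find hex, h2⟩⟩ (hdisj n)
  · rfl
  · exfalso
    have hu : uu p q (Nat.find hex) = n := by
      rcases hspec with h | h | h
      · exact absurd h h1
      · exact absurd h h2
      · exact h
    have hev := (event_bounds hdisj hu ⟨i0, Or.inl hi0⟩).1 ⟨i0, hi0⟩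
    have hdb := decTrunc_bounds hy (Nat.find hex + 1)
    have hsc : (Tint p q (Nat.find hex) : ℝ) < xr p q * 10^(Nat.find hex + 1) := by
      have h4 := hev.1
      unfold fT at h4
      rw [div_lt_iff₀ (by positivity)] at h4
      exact h4
    have h5 : (Tint p q (Nat.find hex) : ℝ) < (decTrunc y (Nat.find hex + 1) : ℝ) + 1 :=
      lt_of_lt_of_le hsc hdb.2
    have h6 : Tint p q (Nat.find hex) < decTrunc y (Nat.find hex + 1) + 1 := by
      exact_mod_cast h5
    omega

lemma H1'_zero {p q y : Baire} (hdisj : ∀ n, ¬(n ∈ rangeM p ∧ n ∈ rangeM q))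
    (hy : rhoDec y (xr p q)) {n : ℕ} (hn : n ∈ rangeM q) : H1' p q y n = 0 := by
  obtain ⟨i0, hi0⟩ := hn
  have hex : ∃ j, (p j = n+1 ∨ q j = n+1 ∨ uu p q j = n) := ⟨i0, Or.inr (Or.inl hi0)⟩
  unfold H1'
  rw [dif_pos hex]
  have hspec := Nat.find_spec hex
  split_ifs with h1 h2 h3
  · exact absurd ⟨⟨Nat.find hex, h1⟩, ⟨i0, hi0⟩⟩ (hdisj n)
  · rfl
  · exfalso
    have hu : uu p q (Nat.find hex) = n := by
      rcases hspec with h | h | h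
      · exact absurd h h1
      · exact absurd h h2
      · exact h
    have hev := (event_bounds hdisj hu ⟨i0, Or.inr hi0⟩).2 ⟨i0, hi0⟩
    have hdb := decTrunc_bounds hy (Nat.find hex + 1)
    have hsc : xr p q * 10^(Nat.find hex + 1) < (Tint p q (Nat.find hex) : ℝ) := by
      have h4 := hev.2
      unfold fT at h4
      rw [lt_div_iff₀ (by positivity)] at h4
      linarith
    have h5 : (decTrunc y (Nat.find hex + 1) : ℝ) < (Tint p q (Nat.find hex) : ℝ) :=
      lt_of_le_of_lt hdb.1 hsc
    have h6 : decTrunc y (Nat.find hex + 1) < Tint p q (Nat.find hex) := by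
      exact_mod_cast h5
    omega
  · rfl

lemma H1_correct {r y : Baire} (hdom : r ∈ SEP1.dom)
    (hy : rhoDec y (xr (pfst r) (psnd r))) :
    H1 (pairB r y) ∈ SEP.sol r := by
  have hdisj : ∀ n, ¬(n ∈ rangeM (pfst r) ∧ n ∈ rangeM (psnd r)) := by
    intro n hn
    have h1 := hdom.1
    rw [Set.eq_empty_iff_forall_notMem] at h1
    exact h1 n ⟨hn.1, hn.2⟩
  have hHeq : H1 (pairB r y) = H1' (pfst r) (psnd r) y := by
    unfold H1
    rw [pfst_pairB, psnd_pairB]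
  rw [hHeq]
  refine ⟨{n | H1' (pfst r) (psnd r) y n = 1}, ?_, ?_, ?_⟩
  · funext n
    rw [chi_eq_ite]
    rcases H1'_vals (pfst r) (psnd r) y n with h | h <;>
      simp only [Set.mem_setOf_eq, h] <;> norm_num
  · intro n hn
    exact H1'_one hdisj hy hn
  · intro n hn
    simp only [Set.mem_setOf_eq] at hn
    intro hmem
    rw [H1'_zero hdisj hy hmem] at hn
    exact one_ne_zero hn.symm

lemma decby_all {p q : Baire} {n : ℕ}
    (hbelow : ∀ m, m < n → ∃ i, p i = m+1 ∨ q i = m+1) :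
    ∃ j, ∀ m, m < n → DecBy p q m j := by
  induction n with
  | zero => exact ⟨0, fun m hm => absurd hm (by omega)⟩
  | succ k ih =>
    obtain ⟨j, hj⟩ := ih (fun m hm => hbelow m (by omega))
    obtain ⟨i, hi⟩ := hbelow k (by omega)
    refine ⟨max j (i+1), fun m hm => ?_⟩
    rcases Nat.lt_or_ge m k with h | h
    · exact DecBy_mono (le_max_left _ _) (hj m h)
    · have hmk : m = k := by omega
      subst hmk
      have hle := le_max_right j (i+1)
      exact ⟨i, by omega, hi⟩

lemma DecBy_congr {p q p' q' : Baire} {k : ℕ} (hp : ∀ i, i < k → p' i = p i)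
    (hq : ∀ i, i < k → q' i = q i) (n : ℕ) : DecBy p' q' n k ↔ DecBy p q n k := by
  unfold DecBy
  constructor <;> rintro ⟨i, hi, hc⟩ <;> refine ⟨i, hi, ?_⟩
  · simp only [← hp i hi, ← hq i hi]
    exact hc
  · simp only [hp i hi, hq i hi]
    exact hc

lemma uu_congr {p q p' q' : Baire} {k : ℕ} (hp : ∀ i, i < k → p' i = p i)
    (hq : ∀ i, i < k → q' i = q i) : uu p' q' k = uu p q k := by
  unfold uu
  exact find_congr _ _ (fun n => not_congr (DecBy_congr hp hq n))

lemma Tint_congr {p q p' q' : Baire} {K : ℕ} (hp : ∀ i, i < K → p' i = p i)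
    (hq : ∀ i, i < K → q' i = q i) :
    ∀ k, k ≤ K → Tint p' q' k = Tint p q k := by
  intro k
  induction k with
  | zero => intro _; rfl
  | succ i ih =>
    intro hik
    have h1 : Tint p' q' i = Tint p q i := ih (by omega)
    have hu1 : uu p' q' i = uu p q i :=
      uu_congr (fun j hj => hp j (by omega)) (fun j hj => hq j (by omega))
    have hu2 : uu p' q' (i+1) = uu p q (i+1) :=
      uu_congr (fun j hj => hp j (by omega)) (fun j hj => hq j (by omega))
    have hiff : (∃ j, j < i+1 ∧ p' j = uu p q i + 1) ↔ (∃ j, j < i+1 ∧ p j = uu p q i + 1) := by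
      constructor <;> rintro ⟨j, hj, hc⟩ <;> refine ⟨j, hj, ?_⟩
      · rw [← hp j (by omega)]
        exact hc
      · rw [hp j (by omega)]
        exact hc
    have hdd : dd p' q' i = dd p q i := by
      unfold dd
      rw [hu1, hu2]
      simp only [hiff]
    show 10 * Tint p' q' i + dd p' q' i = 10 * Tint p q i + dd p q i
    rw [h1, hdd]

lemma decTrunc_congr {y y' : Baire} {s : ℕ} (hy : ∀ i, i ≤ s → y' i = y i) :
    decTrunc y' s = decTrunc y s := by
  unfold decTrunc
  rw [hy 0 (by omega)]
  congr 1
  apply Finset.sum_congr rfl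
  intro i hi
  rw [Finset.mem_range] at hi
  rw [hy (i+1) (by omega)]

lemma H1'_congr {p q y p' q' y' : Baire} {n : ℕ}
    (hex : ∃ j, p j = n+1 ∨ q j = n+1 ∨ uu p q j = n)
    (hp : ∀ i, i ≤ Nat.find hex + 1 → p' i = p i)
    (hq : ∀ i, i ≤ Nat.find hex + 1 → q' i = q i)
    (hy : ∀ i, i ≤ Nat.find hex + 1 → y' i = y i) :
    H1' p' q' y' n = H1' p q y n := by
  have hPiff : ∀ j, j ≤ Nat.find hex →
      ((p' j = n+1 ∨ q' j = n+1 ∨ uu p' q' j = n) ↔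
        (p j = n+1 ∨ q j = n+1 ∨ uu p q j = n)) := by
    intro j hj
    have h1 : p' j = p j := hp j (by omega)
    have h2 : q' j = q j := hq j (by omega)
    have h3 : uu p' q' j = uu p q j :=
      uu_congr (fun i hi => hp i (by omega)) (fun i hi => hq i (by omega))
    rw [h1, h2, h3]
  have hex' : ∃ j, p' j = n+1 ∨ q' j = n+1 ∨ uu p' q' j = n :=
    ⟨Nat.find hex, (hPiff _ le_rfl).mpr (Nat.find_spec hex)⟩
  have hfind : Nat.find hex' = Nat.find hex := by
    rw [Nat.find_eq_iff]
    exact ⟨(hPiff _ le_rfl).mpr (Nat.find_spec hex),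
      fun m hm hc => Nat.find_min hex hm ((hPiff m (by omega)).mp hc)⟩
  unfold H1'
  rw [dif_pos hex', dif_pos hex, hfind]
  have hT : Tint p' q' (Nat.find hex) = Tint p q (Nat.find hex) :=
    Tint_congr (fun i hi => hp i (by omega)) (fun i hi => hq i (by omega)) _ le_rfl
  have hD : decTrunc y' (Nat.find hex + 1) = decTrunc y (Nat.find hex + 1) :=
    decTrunc_congr (fun i hi => hy i hi)
  rw [hp _ (by omega), hq _ (by omega), hT, hD]

lemma wred1 : WRed SEP1 (implProblem rhoCauchy rhoDec) := by
  classical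
  refine ⟨Set.univ,
    {z | ∀ n, ∃ j, (pfst (pfst z) j = n+1 ∨ psnd (pfst z) j = n+1 ∨
      uu (pfst (pfst z)) (psnd (pfst z)) j = n)}, K1, H1, ?_, ?_, ?_⟩
  · apply continuousOn_of_prefix
    intro r _ m
    refine ⟨2*(m+2)+2, ?_⟩
    intro r' hr'
    have hp : ∀ i, i < m+2 → pfst r' i = pfst r i := fun i hi => hr' (2*i) (by omega)
    have hq : ∀ i, i < m+2 → psnd r' i = psnd r i := fun i hi => hr' (2*i+1) (by omega)
    unfold K1
    rw [Tint_congr hp hq (m+2) le_rfl]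
  · apply continuousOn_of_prefix
    intro z hz n
    have hex : ∃ j, (pfst (pfst z) j = n+1 ∨ psnd (pfst z) j = n+1 ∨
        uu (pfst (pfst z)) (psnd (pfst z)) j = n) := hz n
    refine ⟨4*(Nat.find hex + 2) + 10, ?_⟩
    intro z' hz'
    have hp : ∀ i, i ≤ Nat.find hex + 1 → pfst (pfst z') i = pfst (pfst z) i :=
      fun i hi => hz' (2*(2*i)) (by omega)
    have hq : ∀ i, i ≤ Nat.find hex + 1 → psnd (pfst z') i = psnd (pfst z) i :=
      fun i hi => hz' (2*(2*i+1)) (by omega)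
    have hy : ∀ i, i ≤ Nat.find hex + 1 → psnd z' i = psnd z i :=
      fun i hi => hz' (2*i+1) (by omega)
    exact H1'_congr hex hp hq hy
  · intro r hr
    refine ⟨trivial, ⟨xr (pfst r) (psnd r), K1_rho r⟩, ?_⟩
    intro y' hy'
    obtain ⟨x', hx1, hx2⟩ := hy'
    have hxeq : x' = xr (pfst r) (psnd r) := rhoCauchy_unique hx1 (K1_rho r)
    rw [hxeq] at hx2
    constructor
    · -- membership in Hd
      intro n
      simp only [pfst_pairB, psnd_pairB]
      by_cases hA : n ∈ rangeM (pfst r)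
      · obtain ⟨i, hi⟩ := hA
        exact ⟨i, Or.inl hi⟩
      · by_cases hB : n ∈ rangeM (psnd r)
        · obtain ⟨i, hi⟩ := hB
          exact ⟨i, Or.inr (Or.inl hi)⟩
        · have hcompl : n ∈ (rangeM (pfst r) ∪ rangeM (psnd r))ᶜ := by
            simp only [Set.mem_compl_iff, Set.mem_union]
            tauto
          have huniq : ∀ m, m ∈ (rangeM (pfst r) ∪ rangeM (psnd r))ᶜ → m = n :=
            fun m hm => Set.encard_le_one_iff.mp hr.2 m n hm hcompl
          have hbelow : ∀ m, m < n → ∃ i, pfst r i = m+1 ∨ psnd r i = m+1 := by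
            intro m hm
            by_contra hno
            push_neg at hno
            have hmm : m ∈ (rangeM (pfst r) ∪ rangeM (psnd r))ᶜ := by
              simp only [Set.mem_compl_iff, Set.mem_union, rangeM, Set.mem_setOf_eq]
              push_neg
              constructor
              · intro i
                exact (hno i).1
              · intro i
                exact (hno i).2
            have := huniq m hmm
            omega
          obtain ⟨J, hJ⟩ := decby_all hbelow
          refine ⟨J, Or.inr (Or.inr ?_)⟩
          have hle : uu (pfst r) (psnd r) J ≤ n := by
            apply uu_le
            rintro ⟨i, hi, hc⟩
            rcases hc with h | h
            · exact hA ⟨i, h⟩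
            · exact hB ⟨i, h⟩
          have hge : ¬ uu (pfst r) (psnd r) J < n := by
            intro hlt
            exact uu_spec (pfst r) (psnd r) J (hJ _ hlt)
          omega
    · exact H1_correct hr hx2

lemma main_thm : WEquiv SEP1 (implProblem rhoCauchy rhoDec) := ⟨wred1, wred2⟩

/-- Weihrauch's Theorem 13: `SEP₁ ≡_W (ρ→ρ_10)`. -/
theorem SEP1_equiv_decimal_translator : WEquiv SEP1 (implProblem rhoCauchy rhoDec) := main_thm
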